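/- Let (U₁, U₂) be a type III pair: upper triangular matrices with internal relations αᵢγᵢ = γᵢαᵢ and αᵢβᵢ = rβᵢγᵢ, and mutual relations α₁α₂ = qα₂α₁, α₁γ₂ = q⁻¹γ₂α₁, α₂γ₁ = qγ₁α₂, γ₁γ₂ = qγ₂γ₁, α₁β₂ = qβ₂γ₁, β₁γ₂ = qα₂β₁. Then for all integers n, the entries of U₁^n U₂^n = [[α(n,n), β(n,n)], [0, γ(n,n)]] satisfy α(n,n)γ(n,n) = γ(n,n)α(n,n) and α(n,n)β(n,n) = r^n β(n,n)γ(n,n). -/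

import Mathlib

section a
variable {k A : Type*} [Field k] [Ring A] [Algebra k A]

lemma inv_relX (a c : Aˣ) (b : A) (t : k) (ht : t ≠ 0)
    (h : (a : A) * b = t • (b * c)) :
    ((a⁻¹ : Aˣ) : A) * b = t⁻¹ • (b * ((c⁻¹ : Aˣ) : A)) := by
  have hb : b * (c : A) = t⁻¹ • ((a : A) * b) := by
    rw [h, smul_smul, inv_mul_cancel₀ ht, one_smul]
  conv_lhs => rw [← Units.mul_inv_cancel_right b c, ← mul_assoc, ← mul_assoc]
  rw [mul_assoc ((a⁻¹ : Aˣ) : A) b (c : A), hb, mul_smul_comm, smul_mul_assoc,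
    Units.inv_mul_cancel_left]

lemma zpow_twistX (a c : Aˣ) (b : A) (t : k) (ht : t ≠ 0)
    (h : (a : A) * b = t • (b * c)) (n : ℤ) :
    ((a ^ n : Aˣ) : A) * b = t ^ n • (b * ((c ^ n : Aˣ) : A)) := by
  induction n using Int.induction_on with
  | zero => simp
  | succ m ih =>
      have e1 : ((a ^ ((m : ℤ) + 1) : Aˣ) : A) = ((a ^ (m : ℤ) : Aˣ) : A) * (a : A) := by
        rw [zpow_add_one]; rfl
      rw [e1, mul_assoc, h, mul_smul_comm, ← mul_assoc, ih, smul_mul_assoc, smul_smul,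
        mul_assoc, ← Units.val_mul, ← zpow_add_one]
      congr 1
      rw [zpow_add_one₀ ht]; ring
  | pred m ih =>
      have h' := inv_relX a c b t ht h
      have e1 : ((a ^ (-(m : ℤ) - 1) : Aˣ) : A) = ((a ^ (-(m : ℤ)) : Aˣ) : A) * ((a⁻¹ : Aˣ) : A) := by
        rw [zpow_sub_one]; rfl
      rw [e1, mul_assoc, h', mul_smul_comm, ← mul_assoc, ih, smul_mul_assoc, smul_smul,
        mul_assoc, ← Units.val_mul, ← zpow_sub_one]
      congr 1
      rw [zpow_sub_one₀ ht]; ring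

lemma tri_mulX (a1 b1 c1 a2 b2 c2 : A) :
    !![a1, b1; 0, c1] * !![a2, b2; 0, c2]
      = !![a1 * a2, a1 * b2 + b1 * c2; 0, c1 * c2] := by
  rw [Matrix.mul_fin_two]; simp

lemma scal_upX (t : k) (ht0 : t ≠ 0) (ht1 : t - 1 ≠ 0) (m : ℤ) :
    t ^ m + (t ^ m - 1) / (t - 1) = (t ^ (m + 1) - 1) / (t - 1) := by
  have h2 : t ^ (m + 1) = t ^ m * t := zpow_add_one₀ ht0 m
  rw [h2]; field_simp; ring

lemma scal_downX (t : k) (ht0 : t ≠ 0) (ht1 : t - 1 ≠ 0) (m : ℤ) :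
    -(t⁻¹ * t ^ m) + (t ^ m - 1) / (t - 1) = (t ^ (m - 1) - 1) / (t - 1) := by
  have h1 : t⁻¹ * t ^ m = t ^ (m - 1) := by rw [mul_comm, ← zpow_sub_one₀ ht0]
  have h2 : t ^ m = t ^ (m - 1) * t := by rw [← zpow_add_one₀ ht0]; congr 1; ring
  rw [h1, h2]; field_simp; ring

lemma tri_zpow (a c : Aˣ) (b : A) (t : k) (ht0 : t ≠ 0) (ht1 : t ≠ 1)
    (h : (a : A) * b = t • (b * (c : A)))
    (V : (Matrix (Fin 2) (Fin 2) A)ˣ) (hV : V.val = !![(a : A), b; 0, (c : A)]) (n : ℤ) :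
    (V ^ n).val = !![((a ^ n : Aˣ) : A),
        ((t ^ n - 1) / (t - 1)) • (b * ((c ^ (n - 1) : Aˣ) : A)); 0, ((c ^ n : Aˣ) : A)] := by
  have ht1' : t - 1 ≠ 0 := sub_ne_zero.mpr ht1
  have hVinv : (V⁻¹).val = !![((a⁻¹ : Aˣ) : A),
      -(t⁻¹ • (b * (((c⁻¹ : Aˣ) : A) * ((c⁻¹ : Aˣ) : A)))); 0, ((c⁻¹ : Aˣ) : A)] := by
    apply Units.inv_eq_of_mul_eq_one_right
    rw [hV, tri_mulX]
    have e00 : (a : A) * ((a⁻¹ : Aˣ) : A) = 1 := Units.mul_inv a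
    have e11 : (c : A) * ((c⁻¹ : Aˣ) : A) = 1 := Units.mul_inv c
    have e01 : (a : A) * -(t⁻¹ • (b * (((c⁻¹ : Aˣ) : A) * ((c⁻¹ : Aˣ) : A))))
        + b * ((c⁻¹ : Aˣ) : A) = 0 := by
      rw [mul_neg, mul_smul_comm, ← mul_assoc, h, smul_mul_assoc, smul_smul,
        inv_mul_cancel₀ ht0, one_smul, mul_assoc, Units.mul_inv_cancel_left,
        neg_add_cancel]
    rw [e00, e01, e11, Matrix.one_fin_two]
  induction n using Int.induction_on with
  | zero => simp [Matrix.one_fin_two]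
  | succ m ih =>
      have e : (V ^ ((m : ℤ) + 1)).val = (V ^ (m : ℤ)).val * V.val := by
        rw [← Units.val_mul, ← zpow_add_one]
      rw [e, ih, hV, tri_mulX]
      have e00 : ((a ^ (m : ℤ) : Aˣ) : A) * (a : A) = ((a ^ ((m : ℤ) + 1) : Aˣ) : A) := by
        rw [← Units.val_mul, ← zpow_add_one]
      have e11 : ((c ^ (m : ℤ) : Aˣ) : A) * (c : A) = ((c ^ ((m : ℤ) + 1) : Aˣ) : A) := by
        rw [← Units.val_mul, ← zpow_add_one]
      have e01 : ((a ^ (m : ℤ) : Aˣ) : A) * b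
          + ((t ^ (m : ℤ) - 1) / (t - 1)) • (b * ((c ^ ((m : ℤ) - 1) : Aˣ) : A)) * (c : A)
          = ((t ^ ((m : ℤ) + 1) - 1) / (t - 1)) • (b * ((c ^ (((m : ℤ) + 1) - 1) : Aˣ) : A)) := by
        rw [zpow_twistX a c b t ht0 h m, smul_mul_assoc, mul_assoc, ← Units.val_mul,
          ← zpow_add_one, sub_add_cancel, ← add_smul, scal_upX t ht0 ht1' m,
          show (m : ℤ) + 1 - 1 = (m : ℤ) by ring]
      rw [e00, e01, e11]
  | pred m ih =>
      have e : (V ^ (-(m : ℤ) - 1)).val = (V ^ (-(m : ℤ))).val * (V⁻¹).val := by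
        rw [← Units.val_mul, ← zpow_sub_one]
      rw [e, ih, hVinv, tri_mulX]
      have e00 : ((a ^ (-(m : ℤ)) : Aˣ) : A) * ((a⁻¹ : Aˣ) : A)
          = ((a ^ (-(m : ℤ) - 1) : Aˣ) : A) := by
        rw [← Units.val_mul, ← zpow_sub_one]
      have e11 : ((c ^ (-(m : ℤ)) : Aˣ) : A) * ((c⁻¹ : Aˣ) : A)
          = ((c ^ (-(m : ℤ) - 1) : Aˣ) : A) := by
        rw [← Units.val_mul, ← zpow_sub_one]
      have ecc : ((c ^ (-(m : ℤ) - 1) : Aˣ) : A) * ((c⁻¹ : Aˣ) : A)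
          = ((c ^ (-(m : ℤ) - 1 - 1) : Aˣ) : A) := by
        rw [← Units.val_mul, ← zpow_sub_one]
      have e01 : ((a ^ (-(m : ℤ)) : Aˣ) : A)
            * -(t⁻¹ • (b * (((c⁻¹ : Aˣ) : A) * ((c⁻¹ : Aˣ) : A))))
          + ((t ^ (-(m : ℤ)) - 1) / (t - 1)) • (b * ((c ^ (-(m : ℤ) - 1) : Aˣ) : A)) * ((c⁻¹ : Aˣ) : A)
          = ((t ^ (-(m : ℤ) - 1) - 1) / (t - 1)) • (b * ((c ^ (-(m : ℤ) - 1 - 1) : Aˣ) : A)) := by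
        rw [mul_neg, mul_smul_comm, ← mul_assoc, zpow_twistX a c b t ht0 h (-(m : ℤ)),
          smul_mul_assoc, smul_smul, mul_assoc, ← mul_assoc ((c ^ (-(m : ℤ)) : Aˣ) : A),
          e11, ecc]
        rw [smul_mul_assoc, mul_assoc, ecc, ← neg_smul, ← add_smul,
          scal_downX t ht0 ht1' (-(m : ℤ))]
      rw [e00, e01, e11]

section typeIIIaux
variable {k A : Type*} [Field k] [Ring A] [Algebra k A]

lemma flip_relX {x y : A} {t : k} (ht : t ≠ 0) (h : x * y = t • (y * x)) :
    y * x = t⁻¹ • (x * y) := by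
  rw [h, smul_smul, inv_mul_cancel₀ ht, one_smul]

lemma inv_rel'X (a c : Aˣ) (b : A) (t : k) (ht : t ≠ 0)
    (h : b * (c : A) = t • ((a : A) * b)) :
    b * ((c⁻¹ : Aˣ) : A) = t⁻¹ • (((a⁻¹ : Aˣ) : A) * b) := by
  have hb : (a : A) * b = t⁻¹ • (b * (c : A)) := by
    rw [h, smul_smul, inv_mul_cancel₀ ht, one_smul]
  conv_lhs => rw [← Units.inv_mul_cancel_left a b]
  rw [mul_assoc, hb, smul_mul_assoc, mul_smul_comm, Units.mul_inv_cancel_right]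

lemma zpow_twist'X (a c : Aˣ) (b : A) (t : k) (ht : t ≠ 0)
    (h : b * (c : A) = t • ((a : A) * b)) (n : ℤ) :
    b * ((c ^ n : Aˣ) : A) = t ^ n • (((a ^ n : Aˣ) : A) * b) := by
  induction n using Int.induction_on with
  | zero => simp
  | succ m ih =>
      have e1 : ((c ^ ((m : ℤ) + 1) : Aˣ) : A) = ((c ^ (m : ℤ) : Aˣ) : A) * (c : A) := by
        rw [zpow_add_one]; rfl
      rw [e1, ← mul_assoc, ih, smul_mul_assoc, mul_assoc, h, mul_smul_comm, smul_smul,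
        ← mul_assoc, ← Units.val_mul, ← zpow_add_one, ← zpow_add_one₀ ht]
  | pred m ih =>
      have h' := inv_rel'X a c b t ht h
      have e1 : ((c ^ (-(m : ℤ) - 1) : Aˣ) : A)
          = ((c ^ (-(m : ℤ)) : Aˣ) : A) * ((c⁻¹ : Aˣ) : A) := by
        rw [zpow_sub_one]; rfl
      rw [e1, ← mul_assoc, ih, smul_mul_assoc, mul_assoc, h', mul_smul_comm, smul_smul,
        ← mul_assoc, ← Units.val_mul, ← zpow_sub_one, ← zpow_sub_one₀ ht]

lemma zpow_comm₂X (u v : Aˣ) (t : k) (ht : t ≠ 0)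
    (h : (u : A) * (v : A) = t • ((v : A) * (u : A))) (m n : ℤ) :
    ((u ^ m : Aˣ) : A) * ((v ^ n : Aˣ) : A)
      = t ^ (m * n) • (((v ^ n : Aˣ) : A) * ((u ^ m : Aˣ) : A)) := by
  have h1 : ((u ^ m : Aˣ) : A) * (v : A) = t ^ m • ((v : A) * ((u ^ m : Aˣ) : A)) :=
    zpow_twistX u u (v : A) t ht h m
  have h2 := zpow_twist'X v v ((u ^ m : Aˣ) : A) (t ^ m) (zpow_ne_zero m ht) h1 n
  rw [h2, zpow_mul]

lemma zpow_commuteX (u v : Aˣ) (h : (u : A) * (v : A) = (v : A) * (u : A)) (m n : ℤ) :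
    ((u ^ m : Aˣ) : A) * ((v ^ n : Aˣ) : A) = ((v ^ n : Aˣ) : A) * ((u ^ m : Aˣ) : A) := by
  have hc : Commute u v := Units.ext (by exact_mod_cast h)
  rw [← Units.val_mul, (hc.zpow_zpow m n).eq, Units.val_mul]

lemma pushX {x y z : A} {t : k} (h : x * y = t • (y * z)) (w : A) :
    x * (y * w) = t • (y * (z * w)) := by
  rw [← mul_assoc, h, smul_mul_assoc, mul_assoc]

lemma push1X {x y : A} (h : x * y = y * x) (w : A) :
    x * (y * w) = y * (x * w) := by
  rw [← mul_assoc, h, mul_assoc]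

lemma goal1_auxX (a1 a2 c1 c2 : A) (t : k) (ht : t ≠ 0)
    (h21 : a2 * c1 = t • (c1 * a2)) (h11 : a1 * c1 = c1 * a1)
    (h12 : a1 * c2 = t⁻¹ • (c2 * a1)) (h22 : a2 * c2 = c2 * a2) :
    a1 * a2 * (c1 * c2) = c1 * c2 * (a1 * a2) := by
  rw [mul_assoc a1 a2, pushX h21, mul_smul_comm, h22, push1X h11, pushX h12,
    mul_smul_comm, smul_smul, mul_inv_cancel₀ ht, one_smul, ← mul_assoc]

lemma K1_auxX (a1 a2 b2 c1 c2 c2' : A) (u v w w' : k)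
    (h1 : a1 * b2 = u • (b2 * c1)) (h2 : a2 * b2 = v • (b2 * c2))
    (h5 : c2 * c1 = w • (c1 * c2)) (h7 : c2' * c1 = w' • (c1 * c2'))
    (h9 : c2 * c2' = c2' * c2) (hS : w' = u * w) :
    a1 * (a2 * (a1 * (b2 * c2'))) = v • (a1 * (b2 * (c2' * (c1 * c2)))) := by
  rw [pushX h1 c2']
  simp only [mul_smul_comm]
  rw [pushX h2 (c1 * c2')]
  simp only [mul_smul_comm]
  rw [pushX h1 (c2 * (c1 * c2'))]
  rw [pushX h5 c2']
  rw [pushX h1 (c2' * (c1 * c2))]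
  simp only [mul_smul_comm]
  rw [pushX h7 c2]
  simp only [mul_smul_comm, smul_smul]
  rw [← h9, hS]
  congr 1
  ring

lemma K2_auxX (a1 a2 b1 c1 c2 c1' : A) (u v w w' : k)
    (h3 : a1 * b1 = v • (b1 * c1)) (h4 : a2 * b1 = u⁻¹ • (b1 * c2))
    (h5 : c2 * c1 = w • (c1 * c2)) (h6 : c2 * c1' = w' • (c1' * c2))
    (h8 : c1 * c1' = c1' * c1) (hu : u ≠ 0) (hS : w' = u * w) :
    a1 * (a2 * (b1 * (c1' * c2))) = v • (b1 * (c1' * (c2 * (c1 * c2)))) := by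
  rw [pushX h4 (c1' * c2)]
  simp only [mul_smul_comm]
  rw [pushX h3 (c2 * (c1' * c2))]
  rw [pushX h6 c2]
  rw [pushX h5 c2]
  simp only [mul_smul_comm, smul_smul]
  rw [← push1X h8 (c2 * c2), hS]
  congr 1
  field_simp

end typeIIIaux
end a

/-- Type III pairs (restricted): the entries of `U₁ⁿ U₂ⁿ` satisfy
`α(n,n) γ(n,n) = γ(n,n) α(n,n)` and `α(n,n) β(n,n) = rⁿ β(n,n) γ(n,n)`. -/
theorem typeIII_internal_relations {k A : Type*} [Field k] [Ring A] [Algebra k A]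
    (q r : k) (hq0 : q ≠ 0) (hq1 : q ≠ 1) (hr0 : r ≠ 0) (hr1 : r ≠ 1)
    (α₁ γ₁ α₂ γ₂ : Aˣ) (β₁ β₂ : A)
    -- internal relations (ID2) and (IND2)
    (hI1 : (α₁ : A) * (γ₁ : A) = (γ₁ : A) * (α₁ : A))
    (hI2 : (α₂ : A) * (γ₂ : A) = (γ₂ : A) * (α₂ : A))
    (hB1 : (α₁ : A) * β₁ = r • (β₁ * (γ₁ : A))) (hB2 : (α₂ : A) * β₂ = r • (β₂ * (γ₂ : A)))
    -- mutual relations (MD2) and (MND)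
    (hAA : (α₁ : A) * (α₂ : A) = q • ((α₂ : A) * (α₁ : A)))
    (hAC : (α₁ : A) * (γ₂ : A) = q⁻¹ • ((γ₂ : A) * (α₁ : A)))
    (hCA : (α₂ : A) * (γ₁ : A) = q • ((γ₁ : A) * (α₂ : A)))
    (hCC : (γ₁ : A) * (γ₂ : A) = q • ((γ₂ : A) * (γ₁ : A)))
    (hAB : (α₁ : A) * β₂ = q • (β₂ * (γ₁ : A)))
    (hBC : β₁ * (γ₂ : A) = q • ((α₂ : A) * β₁))
    (V₁ V₂ : (Matrix (Fin 2) (Fin 2) A)ˣ)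
    (hV₁ : V₁.val = !![(α₁ : A), β₁; 0, (γ₁ : A)])
    (hV₂ : V₂.val = !![(α₂ : A), β₂; 0, (γ₂ : A)]) :
    ∀ n : ℤ,
      (V₁ ^ n * V₂ ^ n).val 0 0 *
        (V₁ ^ n * V₂ ^ n).val 1 1
        = (V₁ ^ n * V₂ ^ n).val 1 1 *
          (V₁ ^ n * V₂ ^ n).val 0 0 ∧
      (V₁ ^ n * V₂ ^ n).val 0 0 *
        (V₁ ^ n * V₂ ^ n).val 0 1
        = r ^ n • ((V₁ ^ n * V₂ ^ n).val 0 1 *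
          (V₁ ^ n * V₂ ^ n).val 1 1) := by
  intro n
  have hCC' : (γ₂ : A) * (γ₁ : A) = q⁻¹ • ((γ₁ : A) * (γ₂ : A)) := flip_relX hq0 hCC
  have hBC' : (α₂ : A) * β₁ = q⁻¹ • (β₁ * (γ₂ : A)) := by
    rw [hBC, smul_smul, inv_mul_cancel₀ hq0, one_smul]
  have hqn : (q : k) ^ n ≠ 0 := zpow_ne_zero n hq0
  rw [Units.val_mul, tri_zpow α₁ γ₁ β₁ r hr0 hr1 hB1 V₁ hV₁ n,
    tri_zpow α₂ γ₂ β₂ r hr0 hr1 hB2 V₂ hV₂ n, tri_mulX]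
  simp only [Matrix.of_apply, Matrix.cons_val', Matrix.cons_val_zero, Matrix.cons_val_one,
    Matrix.head_cons, Matrix.empty_val', Matrix.cons_val_fin_one, Matrix.head_fin_const]
  constructor
  · refine goal1_auxX _ _ _ _ (q ^ (n * n)) (zpow_ne_zero _ hq0) ?_ ?_ ?_ ?_
    · exact zpow_comm₂X α₂ γ₁ q hq0 hCA n n
    · exact zpow_commuteX α₁ γ₁ hI1 n n
    · have := zpow_comm₂X α₁ γ₂ q⁻¹ (inv_ne_zero hq0) hAC n n
      rwa [inv_zpow] at this
    · exact zpow_commuteX α₂ γ₂ hI2 n n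
  · have hS : (q⁻¹ : k) ^ ((n - 1) * n) = q ^ n * (q⁻¹) ^ (n * n) := by
      rw [inv_zpow, inv_zpow, ← zpow_neg, ← zpow_neg, ← zpow_add₀ hq0]
      congr 1; ring
    have hS2 : (q⁻¹ : k) ^ (n * (n - 1)) = q ^ n * (q⁻¹) ^ (n * n) := by
      rw [inv_zpow, inv_zpow, ← zpow_neg, ← zpow_neg, ← zpow_add₀ hq0]
      congr 1; ring
    have e1 := K1_auxX ((α₁ ^ n : Aˣ) : A) ((α₂ ^ n : Aˣ) : A) β₂ ((γ₁ ^ n : Aˣ) : A)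
      ((γ₂ ^ n : Aˣ) : A) ((γ₂ ^ (n - 1) : Aˣ) : A) (q ^ n) (r ^ n) ((q⁻¹) ^ (n * n))
      ((q⁻¹) ^ ((n - 1) * n))
      (zpow_twistX α₁ γ₁ β₂ q hq0 hAB n) (zpow_twistX α₂ γ₂ β₂ r hr0 hB2 n)
      (zpow_comm₂X γ₂ γ₁ q⁻¹ (inv_ne_zero hq0) hCC' n n)
      (zpow_comm₂X γ₂ γ₁ q⁻¹ (inv_ne_zero hq0) hCC' (n - 1) n)
      (zpow_commuteX γ₂ γ₂ rfl n (n - 1)) hS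
    have h4 : ((α₂ ^ n : Aˣ) : A) * β₁ = (q ^ n)⁻¹ • (β₁ * ((γ₂ ^ n : Aˣ) : A)) := by
      have := zpow_twistX α₂ γ₂ β₁ q⁻¹ (inv_ne_zero hq0) hBC' n
      rwa [inv_zpow] at this
    have e2 := K2_auxX ((α₁ ^ n : Aˣ) : A) ((α₂ ^ n : Aˣ) : A) β₁ ((γ₁ ^ n : Aˣ) : A)
      ((γ₂ ^ n : Aˣ) : A) ((γ₁ ^ (n - 1) : Aˣ) : A) (q ^ n) (r ^ n) ((q⁻¹) ^ (n * n))
      ((q⁻¹) ^ (n * (n - 1)))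
      (zpow_twistX α₁ γ₁ β₁ r hr0 hB1 n) h4
      (zpow_comm₂X γ₂ γ₁ q⁻¹ (inv_ne_zero hq0) hCC' n n)
      (zpow_comm₂X γ₂ γ₁ q⁻¹ (inv_ne_zero hq0) hCC' n (n - 1))
      (zpow_commuteX γ₁ γ₁ rfl n (n - 1)) hqn hS2
    simp only [mul_smul_comm, smul_mul_assoc, mul_add, add_mul, smul_add, smul_smul, mul_assoc]
    rw [e1, e2]
    simp only [smul_smul]
    rw [mul_comm ((r ^ n - 1) / (r - 1)) (r ^ n)]
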